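/- Stratification holds in ZF: every set is a subset of some level. -/
import Mathlib

def pot (a : ZFSet) : ZFSet :=
  ZFSet.sep (fun x => ∃ c ∈ a, x ⊆ c) (ZFSet.powerset (ZFSet.sUnion a))

def Potent (a : ZFSet) : Prop := ∀ x, (∃ c, x ⊆ c ∧ c ∈ a) → x ∈ a

def IsHistory (h : ZFSet) : Prop := ∀ x ∈ h, x = pot (x ∩ h)

def IsLevel (s : ZFSet) : Prop := ∃ h, IsHistory h ∧ s = pot h

open ZFSet

lemma mem_pot {a x : ZFSet} : x ∈ pot a ↔ ∃ c ∈ a, x ⊆ c := by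
  simp only [pot, ZFSet.mem_sep, ZFSet.mem_powerset]
  refine ⟨fun h => h.2, fun h => ⟨?_, h⟩⟩
  obtain ⟨c, hc, hxc⟩ := h
  exact fun z hz => ZFSet.mem_sUnion.2 ⟨c, hc, hxc hz⟩

lemma pot_potent {a x y : ZFSet} (hx : x ⊆ y) (hy : y ∈ pot a) : x ∈ pot a := by
  obtain ⟨c, hc, hyc⟩ := mem_pot.1 hy
  exact mem_pot.2 ⟨c, hc, hx.trans hyc⟩

lemma subset_pot {a : ZFSet} : a ⊆ pot a := fun x hx => mem_pot.2 ⟨x, hx, fun _ h => h⟩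

lemma pot_mono {a b : ZFSet} (h : a ⊆ b) : pot a ⊆ pot b := fun x hx => by
  obtain ⟨c, hc, hxc⟩ := mem_pot.1 hx
  exact mem_pot.2 ⟨c, h hc, hxc⟩

lemma hist_mem_transitive : ∀ x : ZFSet, ∀ h, IsHistory h → x ∈ h → x.IsTransitive := by
  intro x
  induction x using ZFSet.inductionOn with
  | _ x IH =>
    intro h hh hx
    intro z hz
    rw [hh x hx] at hz
    obtain ⟨c, hc, hzc⟩ := mem_pot.1 hz
    have hcx : c ∈ x := (ZFSet.mem_inter.1 hc).1
    have hch : c ∈ h := (ZFSet.mem_inter.1 hc).2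
    have hct : c.IsTransitive := IH c hcx h hh hch
    intro w hw
    have hwc : w ⊆ c := hct _ (hzc hw)
    rw [hh x hx]
    exact mem_pot.2 ⟨c, hc, hwc⟩

lemma hist_mem_level {h x : ZFSet} (hh : IsHistory h) (hx : x ∈ h) : IsLevel x := by
  refine ⟨x ∩ h, ?_, hh x hx⟩
  intro y hy
  have hyh : y ∈ h := (ZFSet.mem_inter.1 hy).2
  have hyx : y ∈ x := (ZFSet.mem_inter.1 hy).1
  have : y ∩ (x ∩ h) = y ∩ h := by
    ext z
    simp only [ZFSet.mem_inter]
    have hsub : y ⊆ x := hist_mem_transitive x h hh hx _ hyx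
    tauto
  rw [this]
  exact hh y hyh

lemma level_transitive {s : ZFSet} (hs : IsLevel s) : s.IsTransitive := by
  obtain ⟨h, hh, rfl⟩ := hs
  intro z hz
  obtain ⟨c, hc, hzc⟩ := mem_pot.1 hz
  have hct := hist_mem_transitive c h hh hc
  intro w hw
  exact mem_pot.2 ⟨c, hc, hct _ (hzc hw)⟩

/-- Key lemma: every level equals pot of its set of level-members. -/
lemma level_eq_pot_levels {s : ZFSet} (hs : IsLevel s) :
    s = pot (ZFSet.sep (fun t => IsLevel t) s) := by
  obtain ⟨h, hh, rfl⟩ := hs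
  set L := ZFSet.sep (fun t => IsLevel t) (pot h) with hL
  have hhL : h ⊆ L := fun t ht =>
    ZFSet.mem_sep.2 ⟨subset_pot ht, hist_mem_level hh ht⟩
  apply ZFSet.ext
  intro z
  constructor
  · intro hz; exact pot_mono hhL hz
  · intro hz
    obtain ⟨c, hc, hzc⟩ := mem_pot.1 hz
    exact pot_potent hzc (ZFSet.mem_sep.1 hc).1

theorem stmt8 (a : ZFSet) : ∃ s, IsLevel s ∧ a ⊆ s := by
  induction a using ZFSet.inductionOn with
  | _ a IH =>
    classical
    -- choose a level above each member
    have hch : ∀ x ∈ a, ∃ s, IsLevel s ∧ x ⊆ s := fun x hx => IH x hx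
    let g : ZFSet → ZFSet := fun x =>
      if hx : ∃ s, IsLevel s ∧ x ⊆ s then hx.choose else ∅
    have hg : ∀ x ∈ a, IsLevel (g x) ∧ x ⊆ g x := by
      intro x hx
      have hex := hch x hx
      simp only [g, dif_pos hex]
      exact hex.choose_spec
    haveI : ZFSet.Definable₁ g := Classical.allZFSetDefinable _
    let b : ZFSet := ZFSet.image g a
    let h : ZFSet := ZFSet.sep (fun t => IsLevel t ∧ ∃ s ∈ b, t ∈ s ∨ t = s)
      (ZFSet.sUnion b ∪ b)
    have mem_h : ∀ t, t ∈ h ↔ IsLevel t ∧ ∃ s ∈ b, t ∈ s ∨ t = s := by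
      intro t
      simp only [h, ZFSet.mem_sep, ZFSet.mem_union, ZFSet.mem_sUnion]
      constructor
      · exact fun ht => ht.2
      · rintro ⟨hlt, s, hs, hts | rfl⟩
        · exact ⟨Or.inl ⟨s, hs, hts⟩, hlt, s, hs, Or.inl hts⟩
        · exact ⟨Or.inr hs, hlt, t, hs, Or.inr rfl⟩
    -- h is downward closed under levels
    have hdc : ∀ t ∈ h, ∀ u, IsLevel u → u ∈ t → u ∈ h := by
      intro t ht u hu hut
      obtain ⟨hlt, s, hs, hts | rfl⟩ := (mem_h t).1 ht
      · have hls : IsLevel s := by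
          obtain ⟨x, hx, rfl⟩ := ZFSet.mem_image.1 hs
          exact (hg x hx).1
        exact (mem_h u).2 ⟨hu, s, hs, Or.inl ((level_transitive hls) t hts hut)⟩
      · exact (mem_h u).2 ⟨hu, t, hs, Or.inl hut⟩
    have hhist : IsHistory h := by
      intro x hx
      have hlx : IsLevel x := ((mem_h x).1 hx).1
      have : x ∩ h = ZFSet.sep (fun t => IsLevel t) x := by
        ext t
        simp only [ZFSet.mem_inter, ZFSet.mem_sep]
        constructor
        · exact fun ⟨htx, hth⟩ => ⟨htx, ((mem_h t).1 hth).1⟩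
        · exact fun ⟨htx, hlt⟩ => ⟨htx, hdc x hx t hlt htx⟩
      rw [this]
      exact level_eq_pot_levels hlx
    refine ⟨pot h, ⟨h, hhist, rfl⟩, ?_⟩
    intro x hx
    have hgx := hg x hx
    have hgxh : g x ∈ h := (mem_h (g x)).2
      ⟨hgx.1, g x, ZFSet.mem_image.2 ⟨x, hx, rfl⟩, Or.inr rfl⟩
    exact mem_pot.2 ⟨g x, hgxh, hgx.2⟩
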